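/- Let A = σ₁ x₁y₁* + σ₂ x₂y₂* + ⋯ ∈ Mₙ(ℂ) be an SVD with σ₁ > 0, and suppose x₂ ∈ ℂ e₁ while all other left-singular vectors xᵢ (i ≠ 2) are orthogonal to e₁. If A has zero entries at positions (1,p), …, (1,n) (p ≥ 2), then B := σ₂ x₂ y₂* also has zero entries at these positions, A ⊥ B, and B is not BJ-orthogonal to A when σ₂ > 0. -/

import Mathlib

open Matrix

/-- The operator (spectral) norm of a complex matrix, induced by the Euclidean norm on `ℂⁿ`. -/
noncomputable def opNorm {n : ℕ} (A : Matrix (Fin n) (Fin n) ℂ) : ℝ :=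
  ‖Matrix.toEuclideanCLM (𝕜 := ℂ) (n := Fin n) A‖

/-- Birkhoff–James orthogonality of matrices with respect to the operator norm. -/
def BJ {n : ℕ} (A B : Matrix (Fin n) (Fin n) ℂ) : Prop :=
  ∀ c : ℂ, opNorm A ≤ opNorm (A + c • B)

section Aux

variable {n : ℕ}

/-- Sum of rank-one matrices with coefficients `τ`. -/
noncomputable def Msum (x y : Fin n → Fin n → ℂ) (τ : Fin n → ℂ) :
    Matrix (Fin n) (Fin n) ℂ :=
  ∑ i, τ i • Matrix.vecMulVec (x i) (star (y i))

lemma Msum_add_smul (x y : Fin n → Fin n → ℂ) (τ τ' : Fin n → ℂ) (c : ℂ) :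
    Msum x y τ + c • Msum x y τ' = Msum x y (fun i => τ i + c * τ' i) := by
  unfold Msum
  rw [Finset.smul_sum, ← Finset.sum_add_distrib]
  refine Finset.sum_congr rfl fun i _ => ?_
  rw [smul_smul, ← add_smul]

lemma Msum_single (x y : Fin n → Fin n → ℂ) (i₁ : Fin n) (c : ℂ) :
    Msum x y (fun i => if i = i₁ then c else 0) =
      c • Matrix.vecMulVec (x i₁) (star (y i₁)) := by
  unfold Msum
  simp [ite_smul]

lemma Msum_mulVec (x y : Fin n → Fin n → ℂ)
    (hy : ∀ i j, dotProduct (star (y i)) (y j) = if i = j then 1 else 0)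
    (τ : Fin n → ℂ) (j : Fin n) :
    (Msum x y τ).mulVec (y j) = τ j • x j := by
  funext k
  simp only [Msum, Matrix.mulVec, dotProduct, Matrix.sum_apply, Matrix.smul_apply,
    Matrix.vecMulVec_apply, Pi.star_apply, smul_eq_mul, Pi.smul_apply]
  simp_rw [Finset.sum_mul]
  rw [Finset.sum_comm]
  have h1 : ∀ i : Fin n, ∑ m, τ i * (x i k * star (y i m)) * y j m
      = τ i * x i k * dotProduct (star (y i)) (y j) := by
    intro i
    rw [dotProduct, Finset.mul_sum]
    refine Finset.sum_congr rfl fun m _ => by simp only [Pi.star_apply]; ring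
  calc ∑ i, ∑ m, τ i * (x i k * star (y i m)) * y j m
      = ∑ i, τ i * x i k * dotProduct (star (y i)) (y j) :=
        Finset.sum_congr rfl fun i _ => h1 i
    _ = ∑ i, (if i = j then τ i * x i k else 0) := by
        refine Finset.sum_congr rfl fun i _ => ?_
        rw [hy i j]
        split <;> simp
    _ = τ j * x j k := by rw [Finset.sum_ite_eq' Finset.univ j]; simp

/-- Any `n` orthonormal vectors in `ℂⁿ` form an orthonormal basis. -/
lemma exists_onb (hn : 0 < n) (v : Fin n → EuclideanSpace ℂ (Fin n))
    (hv : Orthonormal ℂ v) :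
    ∃ b : OrthonormalBasis (Fin n) ℂ (EuclideanSpace ℂ (Fin n)), ⇑b = v := by
  haveI : Nonempty (Fin n) := ⟨⟨0, hn⟩⟩
  have li := hv.linearIndependent
  have hcard : Fintype.card (Fin n) = Module.finrank ℂ (EuclideanSpace ℂ (Fin n)) := by
    simp [finrank_euclideanSpace]
  have hb : ⇑(basisOfLinearIndependentOfCardEqFinrank li hcard) = v :=
    coe_basisOfLinearIndependentOfCardEqFinrank li hcard
  refine ⟨(basisOfLinearIndependentOfCardEqFinrank li hcard).toOrthonormalBasis
    (by rwa [hb]), ?_⟩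
  rw [Module.Basis.coe_toOrthonormalBasis, hb]

lemma orthonormal_of_dot (v : Fin n → Fin n → ℂ)
    (hv : ∀ i j, dotProduct (star (v i)) (v j) = if i = j then 1 else 0) :
    Orthonormal ℂ (fun i => (WithLp.equiv 2 (Fin n → ℂ)).symm (v i)) := by
  rw [orthonormal_iff_ite]
  intro i j
  rw [← hv i j]
  simp [PiLp.inner_apply, RCLike.inner_apply, dotProduct, mul_comm]

lemma toCLM_apply_y (x y : Fin n → Fin n → ℂ)
    (hy : ∀ i j, dotProduct (star (y i)) (y j) = if i = j then 1 else 0)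
    (τ : Fin n → ℂ) (j : Fin n) :
    Matrix.toEuclideanCLM (𝕜 := ℂ) (n := Fin n) (Msum x y τ)
        ((WithLp.equiv 2 (Fin n → ℂ)).symm (y j)) =
      τ j • (WithLp.equiv 2 (Fin n → ℂ)).symm (x j) := by
  rw [WithLp.equiv_symm_apply, Matrix.toEuclideanCLM_toLp,
    Msum_mulVec x y hy τ j, WithLp.toLp_smul]

lemma le_opNorm_Msum (x y : Fin n → Fin n → ℂ)
    (hx : ∀ i j, dotProduct (star (x i)) (x j) = if i = j then 1 else 0)
    (hy : ∀ i j, dotProduct (star (y i)) (y j) = if i = j then 1 else 0)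
    (τ : Fin n → ℂ) (j : Fin n) :
    ‖τ j‖ ≤ opNorm (Msum x y τ) := by
  set x' : Fin n → EuclideanSpace ℂ (Fin n) :=
    fun i => (WithLp.equiv 2 (Fin n → ℂ)).symm (x i) with hx'
  set y' : Fin n → EuclideanSpace ℂ (Fin n) :=
    fun i => (WithLp.equiv 2 (Fin n → ℂ)).symm (y i) with hy'
  have hox := orthonormal_of_dot x hx
  have hoy := orthonormal_of_dot y hy
  set T := Matrix.toEuclideanCLM (𝕜 := ℂ) (n := Fin n) (Msum x y τ) with hT
  have h1 : T (y' j) = τ j • x' j := toCLM_apply_y x y hy τ j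
  have h2 : ‖T (y' j)‖ ≤ ‖T‖ * ‖y' j‖ := T.le_opNorm _
  rw [h1, norm_smul, hoy.1 j, hox.1 j, mul_one, mul_one] at h2
  exact h2

lemma opNorm_Msum_le (hn : 0 < n) (x y : Fin n → Fin n → ℂ)
    (hx : ∀ i j, dotProduct (star (x i)) (x j) = if i = j then 1 else 0)
    (hy : ∀ i j, dotProduct (star (y i)) (y j) = if i = j then 1 else 0)
    (τ : Fin n → ℂ) (C : ℝ) (hC : 0 ≤ C) (hb : ∀ i, ‖τ i‖ ≤ C) :
    opNorm (Msum x y τ) ≤ C := by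
  obtain ⟨bx, hbx⟩ := exists_onb hn _ (orthonormal_of_dot x hx)
  obtain ⟨by', hby⟩ := exists_onb hn _ (orthonormal_of_dot y hy)
  refine ContinuousLinearMap.opNorm_le_bound _ hC fun u => ?_
  set T := Matrix.toEuclideanCLM (𝕜 := ℂ) (n := Fin n) (Msum x y τ) with hT
  have hTb : ∀ j, T (by' j) = τ j • bx j := by
    intro j
    rw [congrFun hby j, congrFun hbx j]
    exact toCLM_apply_y x y hy τ j
  have hTu : T u = ∑ i, (by'.repr u i * τ i) • bx i := by
    conv_lhs => rw [← by'.sum_repr u]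
    rw [map_sum]
    refine Finset.sum_congr rfl fun i _ => ?_
    rw [ContinuousLinearMap.map_smul, hTb i, smul_smul]
  have hrepr : ∀ k, bx.repr (T u) k = by'.repr u k * τ k := by
    intro k
    rw [OrthonormalBasis.repr_apply_apply, hTu]
    exact bx.orthonormal.inner_right_fintype _ k
  have h1 : ‖T u‖ = ‖bx.repr (T u)‖ := (LinearIsometryEquiv.norm_map _ _).symm
  have h2 : ‖u‖ = ‖by'.repr u‖ := (LinearIsometryEquiv.norm_map _ _).symm
  rw [h1, h2, EuclideanSpace.norm_eq, EuclideanSpace.norm_eq]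
  have key : ∑ i, ‖bx.repr (T u) i‖ ^ 2 ≤ C ^ 2 * ∑ i, ‖by'.repr u i‖ ^ 2 := by
    rw [Finset.mul_sum]
    refine Finset.sum_le_sum fun i _ => ?_
    rw [hrepr i, norm_mul, mul_pow]
    have h3 : ‖τ i‖ ^ 2 ≤ C ^ 2 := by
      have := hb i
      nlinarith [norm_nonneg (τ i)]
    nlinarith [sq_nonneg ‖by'.repr u i‖, sq_nonneg ‖τ i‖]
  calc √(∑ i, ‖bx.repr (T u) i‖ ^ 2) ≤ √(C ^ 2 * ∑ i, ‖by'.repr u i‖ ^ 2) :=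
        Real.sqrt_le_sqrt key
    _ = C * √(∑ i, ‖by'.repr u i‖ ^ 2) := by
        rw [Real.sqrt_mul (sq_nonneg C), Real.sqrt_sq hC]

end Aux

/-- In an SVD `A = Σ σᵢ xᵢ yᵢ*` with `x₂ ∈ ℂ e₁` and all other `xᵢ ⊥ e₁`, if `A`
vanishes at the positions `(1,p), …, (1,n)` (`p ≥ 2`), then `B = σ₂ x₂ y₂*` also
vanishes there, `A ⊥ B`, and if `σ₂ > 0` then `¬ B ⊥ A`. -/
theorem stmt18 {n : ℕ} (hn : 2 ≤ n) (σ : Fin n → ℝ) (x y : Fin n → Fin n → ℂ)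
    (hx : ∀ i j, dotProduct (star (x i)) (x j) = if i = j then 1 else 0)
    (hy : ∀ i j, dotProduct (star (y i)) (y j) = if i = j then 1 else 0)
    (hmono : Antitone σ) (hpos : ∀ i, 0 ≤ σ i)
    (hσ1 : 0 < σ ⟨0, by omega⟩)
    (A : Matrix (Fin n) (Fin n) ℂ)
    (hA : A = ∑ i, (σ i : ℂ) • Matrix.vecMulVec (x i) (star (y i)))
    (hx2 : ∃ c : ℂ, x ⟨1, by omega⟩ = c • (Pi.single (⟨0, by omega⟩ : Fin n) 1 : Fin n → ℂ))
    (hxi : ∀ i : Fin n, i ≠ ⟨1, by omega⟩ → x i ⟨0, by omega⟩ = 0)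
    (p : ℕ) (hp : 2 ≤ p)
    (hAzero : ∀ j : Fin n, p ≤ (j : ℕ) + 1 → A ⟨0, by omega⟩ j = 0)
    (B : Matrix (Fin n) (Fin n) ℂ)
    (hBdef : B = (σ ⟨1, by omega⟩ : ℂ) •
      Matrix.vecMulVec (x ⟨1, by omega⟩) (star (y ⟨1, by omega⟩))) :
    (∀ j : Fin n, p ≤ (j : ℕ) + 1 → B ⟨0, by omega⟩ j = 0) ∧
      BJ A B ∧ (0 < σ ⟨1, by omega⟩ → ¬ BJ B A) := by
  have hn0 : 0 < n := by omega
  set i0 : Fin n := ⟨0, by omega⟩ with hi0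
  set i1 : Fin n := ⟨1, by omega⟩ with hi1
  have hne : i0 ≠ i1 := by
    intro h
    have := congrArg Fin.val h
    simp [hi0, hi1] at this
  -- rewrite A and B as Msum
  have hA' : A = Msum x y (fun i => (σ i : ℂ)) := by rw [hA]; rfl
  have hB' : B = Msum x y (fun i => if i = i1 then (σ i1 : ℂ) else 0) := by
    rw [hBdef, Msum_single]
  have hσ10 : σ i1 ≤ σ i0 := hmono (by simp [hi0, hi1, Fin.le_def])
  have hσtop : ∀ i, σ i ≤ σ i0 := fun i => hmono (by simp [hi0, Fin.le_def])
  refine ⟨?_, ?_, ?_⟩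
  · -- B vanishes where A does
    intro j hj
    have hAentry : A i0 j = (σ i1 : ℂ) * (x i1 i0 * star (y i1 j)) := by
      rw [hA]
      simp only [Matrix.sum_apply, Matrix.smul_apply, Matrix.vecMulVec_apply,
        Pi.star_apply, smul_eq_mul]
      rw [Finset.sum_eq_single i1]
      · intro i _ hi
        rw [hxi i hi]
        ring
      · intro h; exact absurd (Finset.mem_univ i1) h
    have hBentry : B i0 j = (σ i1 : ℂ) * (x i1 i0 * star (y i1 j)) := by
      rw [hBdef]
      simp [Matrix.vecMulVec_apply]
    rw [hBentry, ← hAentry]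
    exact hAzero j hj
  · -- BJ A B
    intro c
    have hcomb : A + c • B = Msum x y
        (fun i => (σ i : ℂ) + c * (if i = i1 then (σ i1 : ℂ) else 0)) := by
      rw [hA', hB', Msum_add_smul]
    have hup : opNorm A ≤ σ i0 := by
      rw [hA']
      refine opNorm_Msum_le hn0 x y hx hy _ _ (le_of_lt hσ1) fun i => ?_
      simp only [Complex.norm_real, Real.norm_eq_abs, abs_of_nonneg (hpos i)]
      exact hσtop i
    have hlow : σ i0 ≤ opNorm (A + c • B) := by
      rw [hcomb]
      have := le_opNorm_Msum x y hx hy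
        (fun i => (σ i : ℂ) + c * (if i = i1 then (σ i1 : ℂ) else 0)) i0
      simp only [if_neg hne, mul_zero, add_zero, Complex.norm_real,
        Real.norm_eq_abs, abs_of_nonneg (hpos i0)] at this
      exact this
    exact le_trans hup hlow
  · -- ¬ BJ B A
    intro hσ2 hBJ
    set t : ℝ := σ i1 / (2 * σ i0) with ht
    have ht0 : 0 < t := div_pos hσ2 (by linarith)
    have hthalf : t ≤ 1 / 2 := by
      rw [ht, div_le_div_iff₀ (by linarith) (by norm_num)]
      linarith
    set C : ℝ := σ i1 * (1 - t) with hC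
    have hCpos : 0 ≤ C := by nlinarith
    have hClt : C < σ i1 := by nlinarith
    have := hBJ ((-t : ℝ) : ℂ)
    have hcomb : B + ((-t : ℝ) : ℂ) • A = Msum x y
        (fun i => (if i = i1 then (σ i1 : ℂ) else 0) + ((-t : ℝ) : ℂ) * (σ i : ℂ)) := by
      rw [hA', hB', Msum_add_smul]
    have hup : opNorm (B + ((-t : ℝ) : ℂ) • A) ≤ C := by
      rw [hcomb]
      refine opNorm_Msum_le hn0 x y hx hy _ _ hCpos fun i => ?_
      by_cases hii : i = i1
      · rw [hii, if_pos rfl]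
        have : (σ i1 : ℂ) + ((-t : ℝ) : ℂ) * (σ i1 : ℂ) = ((σ i1 * (1 - t) : ℝ) : ℂ) := by
          push_cast; ring
        rw [this, Complex.norm_real, Real.norm_eq_abs, abs_of_nonneg (by nlinarith)]
      · simp only [if_neg hii, zero_add]
        have : ((-t : ℝ) : ℂ) * (σ i : ℂ) = ((-t * σ i : ℝ) : ℂ) := by push_cast; ring
        rw [this, Complex.norm_real, Real.norm_eq_abs]
        have habs : |(-t) * σ i| = t * σ i := by
          rw [abs_of_nonpos (by nlinarith [hpos i])]; ring
        rw [habs]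
        have h1 : t * σ i ≤ t * σ i0 := by nlinarith [hσtop i]
        have h2 : t * σ i0 = σ i1 / 2 := by
          rw [ht]
          field_simp
        have h3 : σ i1 / 2 ≤ C := by nlinarith
        linarith
    have hBlow : σ i1 ≤ opNorm B := by
      rw [hB']
      have := le_opNorm_Msum x y hx hy (fun i => if i = i1 then (σ i1 : ℂ) else 0) i1
      simpa [abs_of_nonneg (hpos i1)] using this
    linarith
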